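/- Let 0 < p, q < 1 with q + 2p < 1, and suppose a_{m,t} ≤ 1 − m^{-q} for all m and all 1 ≤ t ≤ m. For ζ = (ζ_1,…,ζ_m) ∈ [0,1]^m define the log-likelihood ratio L_m(ζ) = Σ_{t=1}^m log(1 + ε_m(g_{m,t}(ζ_t) − 1)), where g_{m,t}(y) = a_{m,t}^{-1}·1{y ≤ a_{m,t}} is the density of U[0,a_{m,t}]. Then the likelihood ratio test that rejects the null hypothesis if and only if L_m ≥ 0 is reliable: P0_m(L_m ≥ 0) → 0 and P1_m(L_m < 0) → 0 as m → ∞. (Theorem 3.2, part 1: consistency of the likelihood ratio test.) -/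

import Mathlib

open MeasureTheory Filter Real
open scoped ENNReal

/-- The uniform distribution on `[0, a]` (for `a > 0`). -/
noncomputable def unif (a : ℝ) : Measure ℝ :=
  (ENNReal.ofReal a)⁻¹ • volume.restrict (Set.Icc 0 a)

/-- The mixture `(1 - ε)·U[0,1] + ε·U[0,a]`. -/
noncomputable def mix (ε a : ℝ) : Measure ℝ :=
  ENNReal.ofReal (1 - ε) • unif 1 + ENNReal.ofReal ε • unif a

/-- The null law `P0_m`: `m` i.i.d. uniform-`[0,1]` coordinates. -/
noncomputable def nullLaw (m : ℕ) : Measure (Fin m → ℝ) :=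
  Measure.pi fun _ => unif 1

/-- The alternative law `P1_m`: independent coordinates, the `t`-th distributed as
`(1 - ε)·U[0,1] + ε·U[0, a t]`. -/
noncomputable def altLaw (m : ℕ) (ε : ℝ) (a : Fin m → ℝ) : Measure (Fin m → ℝ) :=
  Measure.pi fun t => mix ε (a t)

/-- The log-likelihood ratio `L_m(ζ) = ∑_t log (1 + ε (g_t(ζ_t) - 1))`, where
`g_t(y) = (a t)⁻¹ · 1{y ≤ a t}` is the density of `U[0, a t]`. -/
noncomputable def LLR (m : ℕ) (ε : ℝ) (a : Fin m → ℝ) (ζ : Fin m → ℝ) : ℝ :=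
  ∑ t, Real.log (1 + ε * ((if ζ t ≤ a t then (a t)⁻¹ else 0) - 1))

namespace LRTaux

noncomputable def rr (ε a y : ℝ) : ℝ := 1 + ε * ((if y ≤ a then a⁻¹ else 0) - 1)

lemma rr_eq (ε a y : ℝ) : rr ε a y = if y ≤ a then 1 - ε + ε / a else 1 - ε := by
  unfold rr; split <;> ring

lemma rr_pos {ε a : ℝ} (hε0 : 0 ≤ ε) (hε1 : ε < 1) (ha : 0 < a) (y : ℝ) : 0 < rr ε a y := by
  rw [rr_eq]; split
  · have : 0 ≤ ε / a := div_nonneg hε0 ha.le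
    linarith
  · linarith

lemma measurable_rr (ε a : ℝ) : Measurable (rr ε a) := by
  unfold rr
  exact (((Measurable.ite (measurableSet_le measurable_id measurable_const)
    measurable_const measurable_const).sub measurable_const).const_mul ε).const_add 1

lemma measurable_LLR (m : ℕ) (ε : ℝ) (a : Fin m → ℝ) : Measurable (LLR m ε a) := by
  unfold LLR
  exact Finset.measurable_sum _ fun t _ =>
    Real.measurable_log.comp ((measurable_rr ε (a t)).comp (measurable_pi_apply t))

lemma sqrt_eq_exp {x : ℝ} (hx : 0 < x) : Real.sqrt x = Real.exp (Real.log x / 2) := by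
  rw [Real.sqrt_eq_rpow, Real.rpow_def_of_pos hx]
  ring_nf

lemma exp_half {m : ℕ} {x : Fin m → ℝ} (h : ∀ t, 0 < x t) :
    Real.exp ((∑ t, Real.log (x t)) / 2) = ∏ t, Real.sqrt (x t) := by
  rw [Finset.sum_div, Real.exp_sum]
  exact Finset.prod_congr rfl fun t _ => (sqrt_eq_exp (h t)).symm

lemma meas_le_lintegral {α : Type*} [MeasurableSpace α] (μ : Measure α) {S : Set α}
    (hS : MeasurableSet S) {F : α → ℝ≥0∞} (h : ∀ x ∈ S, 1 ≤ F x) :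
    μ S ≤ ∫⁻ x, F x ∂μ := by
  calc μ S = ∫⁻ _ in S, 1 ∂μ := by simp
  _ ≤ ∫⁻ x in S, F x ∂μ := setLIntegral_mono' hS fun x hx => h x hx
  _ ≤ _ := setLIntegral_le_lintegral S F

lemma lintegral_pi_prod : ∀ {n : ℕ} (μ : Fin n → Measure ℝ),
    (∀ i, IsProbabilityMeasure (μ i)) → ∀ (f : Fin n → ℝ → ℝ≥0∞), (∀ i, Measurable (f i)) →
    ∫⁻ x, ∏ i, f i (x i) ∂Measure.pi μ = ∏ i, ∫⁻ y, f i y ∂(μ i) := by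
  intro n
  induction n with
  | zero =>
    intro μ hμ f hf
    haveI := hμ
    haveI : IsProbabilityMeasure (Measure.pi μ) := by infer_instance
    simp [measure_univ]
  | succ n ih =>
    intro μ hμ f hf
    haveI := hμ
    have hmp := measurePreserving_piFinSuccAbove μ 0
    have hg : Measurable (fun z : ℝ × (Fin n → ℝ) =>
        f 0 z.1 * ∏ j : Fin n, f j.succ (z.2 j)) :=
      ((hf 0).comp measurable_fst).mul
        (Finset.measurable_prod _ fun j _ =>
          (hf j.succ).comp ((measurable_pi_apply j).comp measurable_snd))
    have key : ∫⁻ x, ∏ i, f i (x i) ∂Measure.pi μ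
        = ∫⁻ z : ℝ × (Fin n → ℝ), f 0 z.1 * ∏ j : Fin n, f j.succ (z.2 j)
            ∂((μ 0).prod (Measure.pi fun j => μ ((0 : Fin (n+1)).succAbove j))) := by
      rw [← hmp.lintegral_comp hg]
      congr 1
      ext x
      rw [Fin.prod_univ_succ]
      simp [MeasurableEquiv.piFinSuccAbove, Fin.zero_succAbove, Fin.tail]
    rw [key, lintegral_prod_mul (f := f 0)
        (g := fun w : Fin n → ℝ => ∏ j : Fin n, f j.succ (w j)) (hf 0).aemeasurable
        (Finset.measurable_prod _ fun j _ =>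
          (hf j.succ).comp (measurable_pi_apply j)).aemeasurable]
    have tail := ih (fun j => μ ((0 : Fin (n+1)).succAbove j))
      (fun j => hμ _) (fun j => f j.succ) (fun j => hf _)
    simp only [Fin.zero_succAbove] at tail ⊢
    rw [tail, Fin.prod_univ_succ]

end LRTaux

namespace LRTaux

variable {ε a : ℝ}

lemma disj_Icc_Ioc {a b : ℝ} : Disjoint (Set.Icc 0 a) (Set.Ioc a b) := by
  rw [Set.disjoint_left]
  rintro x ⟨_, h1⟩ ⟨h2, _⟩
  exact absurd h1 (not_le.mpr h2)

lemma unif_one : unif 1 = volume.restrict (Set.Icc 0 1) := by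
  simp [unif]

/-- generic: lintegral over `unif 1` of a function of `rr`. -/
lemma lint_unif1 (hε1 : ε < 1) (ha0 : 0 < a) (ha1 : a ≤ 1) (c : ℝ → ℝ) :
    ∫⁻ y, ENNReal.ofReal (c (rr ε a y)) ∂(unif 1)
      = ENNReal.ofReal (c (1 - ε + ε / a)) * ENNReal.ofReal a
        + ENNReal.ofReal (c (1 - ε)) * ENNReal.ofReal (1 - a) := by
  rw [unif_one, ← Set.Icc_union_Ioc_eq_Icc ha0.le ha1,
    Measure.restrict_union disj_Icc_Ioc measurableSet_Ioc, lintegral_add_measure]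
  have h1 : ∫⁻ y in Set.Icc 0 a, ENNReal.ofReal (c (rr ε a y)) ∂volume
      = ENNReal.ofReal (c (1 - ε + ε / a)) * ENNReal.ofReal a := by
    rw [setLIntegral_congr_fun measurableSet_Icc
      (fun y hy => by
        rw [rr_eq, if_pos hy.2]), setLIntegral_const, Real.volume_Icc, sub_zero]
  have h2 : ∫⁻ y in Set.Ioc a 1, ENNReal.ofReal (c (rr ε a y)) ∂volume
      = ENNReal.ofReal (c (1 - ε)) * ENNReal.ofReal (1 - a) := by
    rw [setLIntegral_congr_fun measurableSet_Ioc
      (fun y hy => by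
        rw [rr_eq, if_neg (not_le.mpr hy.1)]), setLIntegral_const, Real.volume_Ioc]
  rw [h1, h2]

lemma lint_unifa (ha0 : 0 < a) (c : ℝ → ℝ) :
    ∫⁻ y, ENNReal.ofReal (c (rr ε a y)) ∂(unif a)
      = ENNReal.ofReal (c (1 - ε + ε / a)) := by
  unfold unif
  rw [lintegral_smul_measure, smul_eq_mul]
  rw [setLIntegral_congr_fun measurableSet_Icc
      (fun y hy => by
        rw [rr_eq, if_pos hy.2]), setLIntegral_const, Real.volume_Icc, sub_zero]
  rw [← mul_assoc, mul_comm ((ENNReal.ofReal a)⁻¹), mul_assoc,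
    ENNReal.inv_mul_cancel (by simpa using ha0) ENNReal.ofReal_ne_top, mul_one]

/-- the Hellinger affinity -/
noncomputable def rho (ε a : ℝ) : ℝ :=
  a * Real.sqrt (1 - ε + ε / a) + (1 - a) * Real.sqrt (1 - ε)

lemma rho_nonneg (hε1 : ε ≤ 1) (ha0 : 0 ≤ a) (ha1 : a ≤ 1) : 0 ≤ rho ε a :=
  add_nonneg (mul_nonneg ha0 (Real.sqrt_nonneg _))
    (mul_nonneg (by linarith) (Real.sqrt_nonneg _))

lemma lint_sqrt_unif1 (hε0 : 0 ≤ ε) (hε1 : ε < 1) (ha0 : 0 < a) (ha1 : a ≤ 1) :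
    ∫⁻ y, ENNReal.ofReal (Real.sqrt (rr ε a y)) ∂(unif 1) = ENNReal.ofReal (rho ε a) := by
  rw [lint_unif1 hε1 ha0 ha1 Real.sqrt, ← ENNReal.ofReal_mul (Real.sqrt_nonneg _),
    ← ENNReal.ofReal_mul (Real.sqrt_nonneg _),
    ← ENNReal.ofReal_add (by positivity) (mul_nonneg (Real.sqrt_nonneg _) (by linarith))]
  unfold rho
  congr 1
  ring

lemma lint_invsqrt_mix (hε0 : 0 ≤ ε) (hε1 : ε < 1) (ha0 : 0 < a) (ha1 : a ≤ 1) :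
    ∫⁻ y, ENNReal.ofReal ((Real.sqrt (rr ε a y))⁻¹) ∂(mix ε a) = ENNReal.ofReal (rho ε a) := by
  unfold mix
  rw [lintegral_add_measure, lintegral_smul_measure, lintegral_smul_measure,
    lint_unif1 hε1 ha0 ha1 (fun x => (Real.sqrt x)⁻¹),
    lint_unifa ha0 (fun x => (Real.sqrt x)⁻¹), smul_eq_mul, smul_eq_mul]
  have hA : 0 < 1 - ε + ε / a := by
    have : 0 ≤ ε / a := div_nonneg hε0 ha0.le
    linarith
  set B := Real.sqrt (1 - ε + ε / a) with hBdef
  set u := Real.sqrt (1 - ε) with hudef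
  have hB : 0 < B := Real.sqrt_pos.mpr hA
  have hu : 0 < u := Real.sqrt_pos.mpr (by linarith)
  have hB2 : B ^ 2 = 1 - ε + ε / a := Real.sq_sqrt hA.le
  have hu2 : u ^ 2 = 1 - ε := Real.sq_sqrt (by linarith)
  have e1 : (1 - ε) * u⁻¹ = u := by
    rw [← hu2]; field_simp
  have e2 : (a * (1 - ε) + ε) * B⁻¹ = a * B := by
    have haA : a * (B ^ 2) = a * (1 - ε) + ε := by
      rw [hB2]; field_simp
    rw [← haA]; field_simp
  rw [← ENNReal.ofReal_mul (inv_nonneg.mpr hB.le), ← ENNReal.ofReal_mul (inv_nonneg.mpr hu.le),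
      ← ENNReal.ofReal_mul hε0,
      ← ENNReal.ofReal_add (mul_nonneg (inv_nonneg.mpr hB.le) ha0.le)
        (mul_nonneg (inv_nonneg.mpr hu.le) (by linarith)),
      ← ENNReal.ofReal_mul (by linarith : (0:ℝ) ≤ 1 - ε),
      ← ENNReal.ofReal_add
        (mul_nonneg (by linarith) (add_nonneg (mul_nonneg (inv_nonneg.mpr hB.le) ha0.le)
          (mul_nonneg (inv_nonneg.mpr hu.le) (by linarith))))
        (mul_nonneg hε0 (inv_nonneg.mpr hB.le))]
  unfold rho
  rw [← hBdef, ← hudef]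
  congr 1
  linear_combination e2 + (1 - a) * e1

lemma rho_le {δ : ℝ} (hε0 : 0 < ε) (hε1 : ε < 1) (ha0 : 0 < a) (hδ : 0 < δ)
    (ha1 : a ≤ 1 - δ) : rho ε a ≤ 1 - δ * ε ^ 2 / 8 := by
  have hA : 0 < 1 - ε + ε / a := by
    have : 0 ≤ ε / a := div_nonneg hε0.le ha0.le
    linarith
  unfold rho
  set B := Real.sqrt (1 - ε + ε / a) with hBdef
  set u := Real.sqrt (1 - ε) with hudef
  have hB0 : 0 ≤ B := Real.sqrt_nonneg _
  have hu0 : 0 ≤ u := Real.sqrt_nonneg _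
  have hB2 : B ^ 2 = 1 - ε + ε / a := Real.sq_sqrt hA.le
  have hu2 : u ^ 2 = 1 - ε := Real.sq_sqrt (by linarith)
  have hkey : (1 - a) * u ^ 2 + a * B ^ 2 = 1 := by
    rw [hu2, hB2]; field_simp; ring
  have hu_le : u ≤ 1 - ε / 2 := by nlinarith [hu2, hu0]
  have h1 : δ ≤ 1 - a := by linarith
  have h2 : ε / 2 ≤ 1 - u := by linarith
  have h3 : δ * (ε / 2) ^ 2 ≤ (1 - a) * (1 - u) ^ 2 :=
    mul_le_mul h1 (pow_le_pow_left₀ (by positivity) h2 2) (by positivity) (by linarith)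
  nlinarith [h3, mul_nonneg ha0.le (sq_nonneg (1 - B)), hkey]

end LRTaux

namespace LRTaux

lemma unif_prob {a : ℝ} (ha : 0 < a) : IsProbabilityMeasure (unif a) := by
  constructor
  unfold unif
  rw [Measure.smul_apply, Measure.restrict_apply MeasurableSet.univ, Set.univ_inter,
    Real.volume_Icc, sub_zero, smul_eq_mul,
    ENNReal.inv_mul_cancel (by simpa using ha) ENNReal.ofReal_ne_top]

lemma mix_prob {ε a : ℝ} (hε0 : 0 ≤ ε) (hε1 : ε ≤ 1) (ha : 0 < a) :
    IsProbabilityMeasure (mix ε a) := by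
  haveI h1 := unif_prob one_pos
  haveI h2 := unif_prob ha
  constructor
  unfold mix
  rw [Measure.add_apply, Measure.smul_apply, Measure.smul_apply, measure_univ, measure_univ,
    smul_eq_mul, smul_eq_mul, mul_one, mul_one, ← ENNReal.ofReal_add (by linarith) hε0]
  simp

lemma theta_nonneg {ε δ : ℝ} (hε0 : 0 < ε) (hε1 : ε < 1) (hδ0 : 0 < δ) (hδ1 : δ ≤ 1) :
    0 ≤ 1 - δ * ε ^ 2 / 8 := by nlinarith

lemma null_bound {m : ℕ} {ε δ : ℝ} (hε0 : 0 < ε) (hε1 : ε < 1) (hδ0 : 0 < δ) (hδ1 : δ ≤ 1)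
    {a : Fin m → ℝ} (ha0 : ∀ t, 0 < a t) (ha1 : ∀ t, a t ≤ 1 - δ) :
    nullLaw m {ζ | 0 ≤ LLR m ε a ζ} ≤ ENNReal.ofReal ((1 - δ * ε ^ 2 / 8) ^ m) := by
  have hL := measurable_LLR m ε a
  have hS : MeasurableSet {ζ : Fin m → ℝ | 0 ≤ LLR m ε a ζ} :=
    measurableSet_le measurable_const hL
  have hf : ∀ t : Fin m, Measurable fun y => ENNReal.ofReal (Real.sqrt (rr ε (a t) y)) :=
    fun t => ENNReal.measurable_ofReal.comp
      (Real.continuous_sqrt.measurable.comp (measurable_rr ε (a t)))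
  have step1 : nullLaw m {ζ | 0 ≤ LLR m ε a ζ}
      ≤ ∫⁻ ζ, ∏ t, ENNReal.ofReal (Real.sqrt (rr ε (a t) (ζ t))) ∂(nullLaw m) := by
    apply meas_le_lintegral _ hS
    intro ζ hζ
    rw [← ENNReal.ofReal_prod_of_nonneg (fun t _ => Real.sqrt_nonneg _),
      ← exp_half (fun t => rr_pos hε0.le hε1 (ha0 t) (ζ t))]
    exact ENNReal.one_le_ofReal.mpr (Real.one_le_exp (by
      have h0 : (0:ℝ) ≤ LLR m ε a ζ := hζ
      have : LLR m ε a ζ = ∑ t, Real.log (rr ε (a t) (ζ t)) := rfl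
      rw [this] at h0
      linarith))
  have step2 : ∫⁻ ζ, ∏ t, ENNReal.ofReal (Real.sqrt (rr ε (a t) (ζ t))) ∂(nullLaw m)
      = ∏ t : Fin m, ∫⁻ y, ENNReal.ofReal (Real.sqrt (rr ε (a t) y)) ∂(unif 1) :=
    lintegral_pi_prod _ (fun _ => unif_prob one_pos) _ hf
  refine step1.trans ?_
  rw [step2]
  calc ∏ t : Fin m, ∫⁻ y, ENNReal.ofReal (Real.sqrt (rr ε (a t) y)) ∂(unif 1)
      = ∏ t : Fin m, ENNReal.ofReal (rho ε (a t)) := by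
        refine Finset.prod_congr rfl fun t _ => ?_
        exact lint_sqrt_unif1 hε0.le hε1 (ha0 t) (by linarith [ha1 t])
    _ ≤ ∏ _t : Fin m, ENNReal.ofReal (1 - δ * ε ^ 2 / 8) :=
        Finset.prod_le_prod' fun t _ =>
          ENNReal.ofReal_le_ofReal (rho_le hε0 hε1 (ha0 t) hδ0 (ha1 t))
    _ = ENNReal.ofReal ((1 - δ * ε ^ 2 / 8) ^ m) := by
        rw [Finset.prod_const, Finset.card_univ, Fintype.card_fin,
          ENNReal.ofReal_pow (theta_nonneg hε0 hε1 hδ0 hδ1)]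

lemma alt_bound {m : ℕ} {ε δ : ℝ} (hε0 : 0 < ε) (hε1 : ε < 1) (hδ0 : 0 < δ) (hδ1 : δ ≤ 1)
    {a : Fin m → ℝ} (ha0 : ∀ t, 0 < a t) (ha1 : ∀ t, a t ≤ 1 - δ) :
    altLaw m ε a {ζ | LLR m ε a ζ < 0} ≤ ENNReal.ofReal ((1 - δ * ε ^ 2 / 8) ^ m) := by
  have hL := measurable_LLR m ε a
  have hS : MeasurableSet {ζ : Fin m → ℝ | LLR m ε a ζ < 0} :=
    measurableSet_lt hL measurable_const
  have hf : ∀ t : Fin m, Measurable fun y => ENNReal.ofReal ((Real.sqrt (rr ε (a t) y))⁻¹) :=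
    fun t => ENNReal.measurable_ofReal.comp
      ((Real.continuous_sqrt.measurable.comp (measurable_rr ε (a t))).inv)
  have step1 : altLaw m ε a {ζ | LLR m ε a ζ < 0}
      ≤ ∫⁻ ζ, ∏ t, ENNReal.ofReal ((Real.sqrt (rr ε (a t) (ζ t)))⁻¹) ∂(altLaw m ε a) := by
    apply meas_le_lintegral _ hS
    intro ζ hζ
    rw [← ENNReal.ofReal_prod_of_nonneg (fun t _ => inv_nonneg.mpr (Real.sqrt_nonneg _)),
      Finset.prod_inv_distrib, ← exp_half (fun t => rr_pos hε0.le hε1 (ha0 t) (ζ t)),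
      ← Real.exp_neg]
    exact ENNReal.one_le_ofReal.mpr (Real.one_le_exp (by
      have h0 : LLR m ε a ζ < 0 := hζ
      have : LLR m ε a ζ = ∑ t, Real.log (rr ε (a t) (ζ t)) := rfl
      rw [this] at h0
      linarith))
  have step2 : ∫⁻ ζ, ∏ t, ENNReal.ofReal ((Real.sqrt (rr ε (a t) (ζ t)))⁻¹) ∂(altLaw m ε a)
      = ∏ t : Fin m, ∫⁻ y, ENNReal.ofReal ((Real.sqrt (rr ε (a t) y))⁻¹) ∂(mix ε (a t)) :=
    lintegral_pi_prod _ (fun t => mix_prob hε0.le hε1.le (ha0 t)) _ hf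
  refine step1.trans ?_
  rw [step2]
  calc ∏ t : Fin m, ∫⁻ y, ENNReal.ofReal ((Real.sqrt (rr ε (a t) y))⁻¹) ∂(mix ε (a t))
      = ∏ t : Fin m, ENNReal.ofReal (rho ε (a t)) := by
        refine Finset.prod_congr rfl fun t _ => ?_
        exact lint_invsqrt_mix hε0.le hε1 (ha0 t) (by linarith [ha1 t])
    _ ≤ ∏ _t : Fin m, ENNReal.ofReal (1 - δ * ε ^ 2 / 8) :=
        Finset.prod_le_prod' fun t _ =>
          ENNReal.ofReal_le_ofReal (rho_le hε0 hε1 (ha0 t) hδ0 (ha1 t))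
    _ = ENNReal.ofReal ((1 - δ * ε ^ 2 / 8) ^ m) := by
        rw [Finset.prod_const, Finset.card_univ, Fintype.card_fin,
          ENNReal.ofReal_pow (theta_nonneg hε0 hε1 hδ0 hδ1)]

end LRTaux

namespace LRTaux

lemma toReal_le_g {p q : ℝ} (hp0 : 0 < p) (hq0 : 0 < q) (m : ℕ) (hm : 2 ≤ m) {μS : ℝ≥0∞}
    (h : μS ≤ ENNReal.ofReal
      ((1 - (m:ℝ) ^ (-q) * ((m:ℝ) ^ (-p)) ^ 2 / 8) ^ m)) :
    μS.toReal ≤ Real.exp (-((m:ℝ) ^ (1 - q - 2 * p) / 8)) := by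
  have hm1 : (1:ℝ) < m := by exact_mod_cast Nat.lt_of_lt_of_le one_lt_two hm
  have hm0 : (0:ℝ) < m := by linarith
  set ε := (m:ℝ) ^ (-p) with hεdef
  set δ := (m:ℝ) ^ (-q) with hδdef
  have hε0 : 0 < ε := Real.rpow_pos_of_pos hm0 _
  have hε1 : ε < 1 := Real.rpow_lt_one_of_one_lt_of_neg hm1 (by linarith)
  have hδ0 : 0 < δ := Real.rpow_pos_of_pos hm0 _
  have hδ1 : δ < 1 := Real.rpow_lt_one_of_one_lt_of_neg hm1 (by linarith)
  set θ := δ * ε ^ 2 / 8 with hθdef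
  have hθ0 : 0 ≤ 1 - θ := theta_nonneg hε0 hε1 hδ0 hδ1.le
  have hθnn : 0 ≤ θ := by positivity
  have step1 : μS.toReal ≤ (1 - θ) ^ m :=
    ENNReal.toReal_le_of_le_ofReal (pow_nonneg hθ0 m) h
  have step2 : (1 - θ) ^ m ≤ Real.exp (-θ) ^ m := by
    apply pow_le_pow_left₀ hθ0
    linarith [Real.add_one_le_exp (-θ)]
  have step3 : Real.exp (-θ) ^ m = Real.exp (-((m:ℝ) * θ)) := by
    rw [← Real.exp_nat_mul]
    ring_nf
  have hmθ : (m:ℝ) * θ = (m:ℝ) ^ (1 - q - 2 * p) / 8 := by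
    have h2 : ε ^ 2 = (m:ℝ) ^ (-p * 2) := by
      rw [hεdef, ← Real.rpow_natCast ((m:ℝ) ^ (-p)) 2, ← Real.rpow_mul hm0.le]
      norm_num
    have h3 : (m:ℝ) ^ (1 - q - 2 * p) = (m:ℝ) * (δ * ε ^ 2) := by
      rw [h2, hδdef, show (1 - q - 2 * p) = 1 + (-q + -p * 2) by ring,
        Real.rpow_add hm0, Real.rpow_one, Real.rpow_add hm0]
    rw [hθdef, h3]
    ring
  rw [← hmθ]
  exact step1.trans (step2.trans step3.le)

end LRTaux


open LRTaux

/-- **Theorem 3.2, part 1 (consistency of the likelihood ratio test).** Let `0 < p, q < 1`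
with `q + 2p < 1`, `ε_m = m^{-p}`, and `a m t ∈ (0,1]` with `a m t ≤ 1 - m^{-q}` for all
`m ≥ 2`, `1 ≤ t ≤ m`.  Then the likelihood ratio test rejecting iff `L_m ≥ 0` is reliable:
`P0_m(L_m ≥ 0) → 0` and `P1_m(L_m < 0) → 0` as `m → ∞`. -/
theorem LRT_consistent (p q : ℝ) (hp0 : 0 < p) (hp1 : p < 1)
    (hq0 : 0 < q) (hq1 : q < 1) (hpq : q + 2 * p < 1)
    (a : (m : ℕ) → Fin m → ℝ)
    (ha0 : ∀ m, 2 ≤ m → ∀ t, 0 < a m t)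
    (ha1 : ∀ m : ℕ, 2 ≤ m → ∀ t, a m t ≤ 1 - (m : ℝ) ^ (-q)) :
    Tendsto
      (fun m => (nullLaw m {ζ | 0 ≤ LLR m ((m : ℝ) ^ (-p)) (a m) ζ}).toReal)
      atTop (nhds 0)
    ∧ Tendsto
      (fun m => (altLaw m ((m : ℝ) ^ (-p)) (a m)
        {ζ | LLR m ((m : ℝ) ^ (-p)) (a m) ζ < 0}).toReal)
      atTop (nhds 0) := by
  have hc : 0 < 1 - q - 2 * p := by linarith
  have hgto : Tendsto (fun m : ℕ => Real.exp (-((m:ℝ) ^ (1 - q - 2 * p) / 8)))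
      atTop (nhds 0) := by
    have h1 : Tendsto (fun m : ℕ => (m:ℝ) ^ (1 - q - 2 * p)) atTop atTop :=
      (tendsto_rpow_atTop hc).comp tendsto_natCast_atTop_atTop
    have h2 : Tendsto (fun m : ℕ => (m:ℝ) ^ (1 - q - 2 * p) / 8) atTop atTop :=
      h1.atTop_div_const (by norm_num)
    exact Real.tendsto_exp_atBot.comp (tendsto_neg_atTop_atBot.comp h2)
  have hfacts : ∀ m : ℕ, 2 ≤ m →
      0 < (m:ℝ) ^ (-p) ∧ (m:ℝ) ^ (-p) < 1 ∧ 0 < (m:ℝ) ^ (-q) ∧ (m:ℝ) ^ (-q) ≤ 1 := by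
    intro m hm
    have hm1 : (1:ℝ) < m := by exact_mod_cast Nat.lt_of_lt_of_le one_lt_two hm
    have hm0 : (0:ℝ) < m := by linarith
    exact ⟨Real.rpow_pos_of_pos hm0 _,
      Real.rpow_lt_one_of_one_lt_of_neg hm1 (by linarith),
      Real.rpow_pos_of_pos hm0 _,
      (Real.rpow_lt_one_of_one_lt_of_neg hm1 (by linarith)).le⟩
  constructor
  · apply tendsto_of_tendsto_of_tendsto_of_le_of_le' tendsto_const_nhds hgto
    · exact Eventually.of_forall fun m => ENNReal.toReal_nonneg
    · filter_upwards [eventually_ge_atTop 2] with m hm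
      obtain ⟨hε0, hε1, hδ0, hδ1⟩ := hfacts m hm
      exact toReal_le_g hp0 hq0 m hm
        (null_bound hε0 hε1 hδ0 hδ1 (ha0 m hm) (ha1 m hm))
  · apply tendsto_of_tendsto_of_tendsto_of_le_of_le' tendsto_const_nhds hgto
    · exact Eventually.of_forall fun m => ENNReal.toReal_nonneg
    · filter_upwards [eventually_ge_atTop 2] with m hm
      obtain ⟨hε0, hε1, hδ0, hδ1⟩ := hfacts m hm
      exact toReal_le_g hp0 hq0 m hm
        (alt_bound hε0 hε1 hδ0 hδ1 (ha0 m hm) (ha1 m hm))
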